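/- Let α, γ > 0 and β ∈ ℝ with Q := β/√(αγ) satisfying Q > 3. Then for all ξ, η ∈ ℝ², Re A(ξ + iη) ≥ -(Q² - 1) A(η), where A(z) = α z₁⁴ + 2β z₁² z₂² + γ z₂⁴. -/

import Mathlib

open Complex

set_option maxHeartbeats 1000000

/-- For `α, γ > 0`, `Q = β/√(αγ) > 3`, and all `ξ, η ∈ ℝ²`,
`Re A(ξ+iη) ≥ -(Q²-1) A(η)`. -/
theorem stmt2 (α β γ : ℝ) (hα : 0 < α) (hγ : 0 < γ)
    (hQ : 3 < β / Real.sqrt (α * γ))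
    (ξ1 ξ2 η1 η2 : ℝ) :
    ((α : ℂ) * (ξ1 + η1 * I) ^ 4 + 2 * β * (ξ1 + η1 * I) ^ 2 * (ξ2 + η2 * I) ^ 2
        + γ * (ξ2 + η2 * I) ^ 4).re
      ≥ -((β / Real.sqrt (α * γ)) ^ 2 - 1)
          * (α * η1 ^ 4 + 2 * β * η1 ^ 2 * η2 ^ 2 + γ * η2 ^ 4) := by
  have hαγ : 0 < α * γ := mul_pos hα hγ
  have hr : 0 < Real.sqrt (α * γ) := Real.sqrt_pos.2 hαγ
  set r := Real.sqrt (α * γ) with hrdef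
  set Q := β / r with hQdef
  have hβ : β = Q * r := by rw [hQdef]; exact (div_mul_cancel₀ β hr.ne').symm
  have hsa : Real.sqrt α ^ 2 = α := Real.sq_sqrt hα.le
  have hsg : Real.sqrt γ ^ 2 = γ := Real.sq_sqrt hγ.le
  have hr' : r = Real.sqrt α * Real.sqrt γ := Real.sqrt_mul hα.le γ
  set sa := Real.sqrt α with hsadef
  set sg := Real.sqrt γ with hsgdef
  have hsa0 : 0 ≤ sa := Real.sqrt_nonneg _
  have hsg0 : 0 ≤ sg := Real.sqrt_nonneg _
  have hre : ((α : ℂ) * (ξ1 + η1 * I) ^ 4 + 2 * β * (ξ1 + η1 * I) ^ 2 * (ξ2 + η2 * I) ^ 2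
        + γ * (ξ2 + η2 * I) ^ 4).re
      = α * (ξ1^4 - 6*ξ1^2*η1^2 + η1^4)
        + 2*β*((ξ1^2-η1^2)*(ξ2^2-η2^2) - 4*ξ1*η1*ξ2*η2)
        + γ * (ξ2^4 - 6*ξ2^2*η2^2 + η2^4) := by
    simp only [pow_succ, pow_zero, one_mul, Complex.add_re, Complex.add_im, Complex.mul_re,
      Complex.mul_im, Complex.ofReal_re, Complex.ofReal_im, Complex.I_re, Complex.I_im,
      Complex.re_ofNat, Complex.im_ofNat, mul_zero, zero_mul, mul_one, sub_zero, zero_sub,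
      add_zero, zero_add]
    ring
  rw [hre]
  have key : 0 ≤ α * (ξ1^4 - 6*ξ1^2*η1^2 + η1^4)
        + 2*β*((ξ1^2-η1^2)*(ξ2^2-η2^2) - 4*ξ1*η1*ξ2*η2)
        + γ * (ξ2^4 - 6*ξ2^2*η2^2 + η2^4)
        + (Q^2 - 1) * (α * η1 ^ 4 + 2 * β * η1 ^ 2 * η2 ^ 2 + γ * η2 ^ 4) := by
    have h2Q : 0 < 2*Q := by linarith
    have hid : 2*Q*(α * (ξ1^4 - 6*ξ1^2*η1^2 + η1^4)
        + 2*β*((ξ1^2-η1^2)*(ξ2^2-η2^2) - 4*ξ1*η1*ξ2*η2)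
        + γ * (ξ2^4 - 6*ξ2^2*η2^2 + η2^4)
        + (Q^2 - 1) * (α * η1 ^ 4 + 2 * β * η1 ^ 2 * η2 ^ 2 + γ * η2 ^ 4))
      = (Q+3)*(sa*ξ1^2 + sg*ξ2^2 - Q*(sa*η1^2 + sg*η2^2))^2
        + (Q-3)*(sa*ξ1^2 - sg*ξ2^2 + Q*(sa*η1^2 - sg*η2^2))^2
        + 4*(Q-3)*(Q+1)*((sa*ξ1^2)*(sg*ξ2^2))
        + 4*Q^2*(Q-3)*(Q+1)*((sa*η1^2)*(sg*η2^2))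
        + 8*Q*(sa*sg)*(ξ1*ξ2 - Q*(η1*η2))^2 := by
      rw [hβ, hr', ← hsa, ← hsg]; ring
    have h1 : 0 ≤ (Q+3)*(sa*ξ1^2 + sg*ξ2^2 - Q*(sa*η1^2 + sg*η2^2))^2 :=
      mul_nonneg (by linarith) (sq_nonneg _)
    have h2 : 0 ≤ (Q-3)*(sa*ξ1^2 - sg*ξ2^2 + Q*(sa*η1^2 - sg*η2^2))^2 :=
      mul_nonneg (by linarith) (sq_nonneg _)
    have h3 : 0 ≤ 4*(Q-3)*(Q+1)*((sa*ξ1^2)*(sg*ξ2^2)) := by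
      apply mul_nonneg (by nlinarith)
      exact mul_nonneg (mul_nonneg hsa0 (sq_nonneg _)) (mul_nonneg hsg0 (sq_nonneg _))
    have h4 : 0 ≤ 4*Q^2*(Q-3)*(Q+1)*((sa*η1^2)*(sg*η2^2)) := by
      apply mul_nonneg (by nlinarith [mul_nonneg (mul_nonneg (sq_nonneg Q) (by linarith : (0:ℝ) ≤ Q-3)) (by linarith : (0:ℝ) ≤ Q+1)])
      exact mul_nonneg (mul_nonneg hsa0 (sq_nonneg _)) (mul_nonneg hsg0 (sq_nonneg _))
    have h5 : 0 ≤ 8*Q*(sa*sg)*(ξ1*ξ2 - Q*(η1*η2))^2 :=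
      mul_nonneg (mul_nonneg (by linarith) (mul_nonneg hsa0 hsg0)) (sq_nonneg _)
    by_contra hcon
    push_neg at hcon
    have hneg := mul_neg_of_pos_of_neg h2Q hcon
    rw [hid] at hneg
    linarith
  linarith
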